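/- Let n ≥ 1. The number of points [y_0 : ⋯ : y_n] in P^n(Q) of naive height at most B (where the height of a point with coprime integer coordinates is max_i |y_i|) is asymptotically equivalent to (2^n/ζ(n+1)) · B^{n+1} as B → ∞. -/

import Mathlib

open Filter Topology ArithmeticFunction


noncomputable def boxF (m b : ℕ) : Finset (Fin m → ℤ) :=
  Fintype.piFinset fun _ => Finset.Icc (-(b : ℤ)) (b : ℤ)

noncomputable def TbF (m b : ℕ) : Finset (Fin m → ℤ) := (boxF m b).filter (· ≠ 0)

noncomputable def copF (m b : ℕ) : Finset (Fin m → ℤ) :=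
  (boxF m b).filter fun y => Finset.univ.gcd y = 1

lemma mem_boxF {m b : ℕ} {y : Fin m → ℤ} : y ∈ boxF m b ↔ ∀ i, |y i| ≤ (b : ℤ) := by
  simp [boxF, Fintype.mem_piFinset, abs_le]

lemma card_boxF (m b : ℕ) : (boxF m b).card = (2 * b + 1) ^ m := by
  rw [boxF, Fintype.card_piFinset]
  simp only [Int.card_Icc, Finset.prod_const, Finset.card_univ, Fintype.card_fin]
  congr 1
  have : (b : ℤ) + 1 - -(b : ℤ) = ((2 * b + 1 : ℕ) : ℤ) := by push_cast; ring
  rw [this, Int.toNat_natCast]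

lemma zero_mem_boxF (m b : ℕ) : (0 : Fin m → ℤ) ∈ boxF m b := by
  rw [mem_boxF]; intro i; simp

lemma card_TbF (m b : ℕ) : ((TbF m b).card : ℤ) = (2 * (b : ℤ) + 1) ^ m - 1 := by
  rw [TbF, Finset.filter_ne', Finset.card_erase_of_mem (zero_mem_boxF m b), card_boxF]
  have h1 : 1 ≤ (2 * b + 1) ^ m := Nat.one_le_pow _ _ (by omega)
  push_cast [Nat.cast_sub h1]
  ring_nf

lemma card_divPoints (m b d : ℕ) (hd : 0 < d) :
    (((TbF m b).filter fun y => ∀ i, (d : ℤ) ∣ y i).card) = (TbF m (b / d)).card := by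
  have hd' : (0 : ℤ) < (d : ℤ) := by exact_mod_cast hd
  apply Finset.card_bij' (fun y _ => fun i => y i / (d : ℤ))
    (fun z _ => fun i => (d : ℤ) * z i)
  · -- maps into
    intro y hy
    simp only [Finset.mem_filter, TbF, mem_boxF] at hy ⊢
    obtain ⟨⟨hbox, hne⟩, hdvd⟩ := hy
    constructor
    · intro i
      obtain ⟨c, hc⟩ := hdvd i
      rw [hc, Int.mul_ediv_cancel_left _ hd'.ne']
      rw [Int.natCast_div, Int.le_ediv_iff_mul_le hd']
      calc |c| * (d : ℤ) = |(d : ℤ) * c| := by rw [abs_mul, abs_of_pos hd']; ring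
        _ = |y i| := by rw [hc]
        _ ≤ b := hbox i
    · intro h0
      apply hne
      funext i
      obtain ⟨c, hc⟩ := hdvd i
      have h1 : y i / (d : ℤ) = 0 := congrFun h0 i
      rw [hc, Int.mul_ediv_cancel_left _ hd'.ne'] at h1
      simp [hc, h1]
  · -- reverse maps into
    intro z hz
    simp only [Finset.mem_filter, TbF, mem_boxF] at hz ⊢
    obtain ⟨hbox, hne⟩ := hz
    refine ⟨⟨fun i => ?_, fun h0 => hne (funext fun i => ?_)⟩, fun i => ⟨z i, rfl⟩⟩
    · rw [abs_mul, abs_of_pos hd']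
      calc (d : ℤ) * |z i| ≤ (d : ℤ) * ((b / d : ℕ) : ℤ) :=
            mul_le_mul_of_nonneg_left (hbox i) hd'.le
        _ ≤ (b : ℤ) := by exact_mod_cast Nat.mul_div_le b d
    · have h1 := congrFun h0 i
      simp only [Pi.zero_apply, mul_eq_zero] at h1
      rcases h1 with h | h
      · exact absurd h hd'.ne'
      · simpa using h
  · intro y hy
    simp only [Finset.mem_filter] at hy
    funext i
    exact Int.mul_ediv_cancel' (hy.2 i)
  · intro z hz
    funext i
    exact Int.mul_ediv_cancel_left _ hd'.ne'

lemma moebius_sum_divisors (k : ℕ) :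
    (∑ d ∈ k.divisors, (moebius d : ℤ)) = if k = 1 then 1 else 0 := by
  have h2 : (moebius * (zeta : ArithmeticFunction ℕ) : ArithmeticFunction ℤ) k
      = (1 : ArithmeticFunction ℤ) k := by rw [moebius_mul_coe_zeta]
  rwa [ArithmeticFunction.coe_mul_zeta_apply, ArithmeticFunction.one_apply] at h2

lemma count_main (m b : ℕ) :
    ((copF m b).card : ℤ) =
      ∑ d ∈ Finset.Icc 1 b, (moebius d : ℤ) * ((2 * ((b / d : ℕ) : ℤ) + 1) ^ m - 1) := by
  classical
  have step1 : ∀ d ∈ Finset.Icc 1 b,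
      (moebius d : ℤ) * ((2 * ((b / d : ℕ) : ℤ) + 1) ^ m - 1) =
      (moebius d : ℤ) * (((TbF m b).filter fun y => ∀ i, (d : ℤ) ∣ y i).card : ℤ) := by
    intro d hd
    rw [Finset.mem_Icc] at hd
    rw [card_divPoints m b d (by omega), card_TbF]
  rw [Finset.sum_congr rfl step1]
  have step2 : ∀ d : ℕ, (((TbF m b).filter fun y => ∀ i, (d : ℤ) ∣ y i).card : ℤ) =
      ∑ y ∈ TbF m b, (if ∀ i, (d : ℤ) ∣ y i then (1 : ℤ) else 0) := by
    intro d
    rw [Finset.card_filter]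
    push_cast
    rfl
  simp_rw [step2, Finset.mul_sum]
  rw [Finset.sum_comm]
  have step3 : ∀ y ∈ TbF m b,
      (∑ d ∈ Finset.Icc 1 b, (moebius d : ℤ) * (if ∀ i, (d : ℤ) ∣ y i then (1:ℤ) else 0)) =
      (if Finset.univ.gcd y = 1 then (1 : ℤ) else 0) := by
    intro y hy
    simp only [TbF, Finset.mem_filter, mem_boxF] at hy
    obtain ⟨hbox, hne⟩ := hy
    set g : ℤ := Finset.univ.gcd y with hg
    have hgnn : 0 ≤ g := Int.nonneg_of_normalize_eq_self (Finset.normalize_gcd)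
    have hgne : g ≠ 0 := by
      intro h
      apply hne
      funext i
      exact (Finset.gcd_eq_zero_iff.mp h) i (Finset.mem_univ i)
    set gn : ℕ := g.toNat with hgn
    have hgcast : (gn : ℤ) = g := Int.toNat_of_nonneg hgnn
    have hgnne : gn ≠ 0 := fun h => hgne (by rw [← hgcast, h]; rfl)
    have hgnb : gn ≤ b := by
      obtain ⟨i, hi⟩ : ∃ i, y i ≠ 0 := by
        by_contra h
        push_neg at h
        exact hne (funext h)
      have hdvd' : (gn : ℤ) ∣ y i := by
        rw [hgcast]; exact Finset.gcd_dvd (Finset.mem_univ i)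
      have hdvd : gn ∣ (y i).natAbs := by
        rw [← Int.natAbs_natCast gn]
        exact Int.natAbs_dvd_natAbs.mpr hdvd' 
      have h1 : (y i).natAbs ≤ b := by
        have := hbox i
        rw [Int.abs_eq_natAbs] at this
        exact_mod_cast this
      exact (Nat.le_of_dvd (Int.natAbs_pos.mpr hi) hdvd).trans h1
    have hiff : ∀ d : ℕ, (∀ i, (d : ℤ) ∣ y i) ↔ d ∣ gn := by
      intro d
      constructor
      · intro h
        have : (d : ℤ) ∣ g := Finset.dvd_gcd fun i _ => h i
        rwa [← hgcast, Int.natCast_dvd_natCast] at this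
      · intro h i
        have h1 : (d : ℤ) ∣ g := by rw [← hgcast]; exact_mod_cast h
        exact h1.trans (Finset.gcd_dvd (Finset.mem_univ i))
    have hset : (Finset.Icc 1 b).filter (fun d : ℕ => ∀ i, (d : ℤ) ∣ y i) = gn.divisors := by
      ext d
      rw [Finset.mem_filter, Finset.mem_Icc, Nat.mem_divisors, hiff d]
      constructor
      · rintro ⟨⟨h1, h2⟩, h3⟩
        exact ⟨h3, hgnne⟩
      · rintro ⟨h1, h2⟩
        have hd0 : d ≠ 0 := by rintro rfl; exact hgnne (Nat.eq_zero_of_zero_dvd h1)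
        exact ⟨⟨Nat.one_le_iff_ne_zero.mpr hd0, (Nat.le_of_dvd (Nat.pos_of_ne_zero hgnne) h1).trans hgnb⟩, h1⟩
    calc (∑ d ∈ Finset.Icc 1 b, (moebius d : ℤ) * (if ∀ i, (d : ℤ) ∣ y i then (1:ℤ) else 0))
        = ∑ d ∈ (Finset.Icc 1 b).filter (fun d : ℕ => ∀ i, (d : ℤ) ∣ y i), (moebius d : ℤ) := by
          rw [Finset.sum_filter]
          exact Finset.sum_congr rfl fun d _ => by rw [mul_ite, mul_one, mul_zero]
      _ = ∑ d ∈ gn.divisors, (moebius d : ℤ) := by rw [hset]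
      _ = if gn = 1 then 1 else 0 := moebius_sum_divisors gn
      _ = if g = 1 then 1 else 0 := by
          congr 1
          simp only [eq_iff_iff]
          constructor
          · intro h; rw [← hgcast, h]; rfl
          · intro h; have : (gn : ℤ) = 1 := by rw [hgcast, h]
            exact_mod_cast this
  rw [Finset.sum_congr rfl step3]
  rw [← Finset.sum_filter]
  have : (TbF m b).filter (fun y => Finset.univ.gcd y = 1) = copF m b := by
    rw [TbF, copF, Finset.filter_filter]
    apply Finset.filter_congr
    intro y hy
    simp only [and_iff_right_iff_imp]
    intro hgcd h0
    rw [h0] at hgcd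
    have h00 : Finset.univ.gcd (0 : Fin m → ℤ) = 0 :=
      Finset.gcd_eq_zero_iff.mpr fun i _ => rfl
    rw [h00] at hgcd
    exact absurd hgcd (by norm_num)
  rw [this]
  simp [Finset.card_filter]



noncomputable def Ffun (m : ℕ) (B : ℝ) (d : ℕ) : ℝ :=
  (moebius d : ℝ) * ((2 * ((⌊B⌋₊ / d : ℕ) : ℝ) + 1) ^ m - 1) / B ^ m

lemma Ffun_vanish {m : ℕ} {B : ℝ} {d : ℕ} (hd : d ∉ Finset.Icc 1 ⌊B⌋₊) :
    Ffun m B d = 0 := by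
  rw [Finset.mem_Icc, not_and_or] at hd
  rcases hd with hd | hd
  · have : d = 0 := by omega
    subst this
    simp [Ffun, ArithmeticFunction.map_zero]
  · push_neg at hd
    have : ⌊B⌋₊ / d = 0 := Nat.div_eq_of_lt hd
    simp [Ffun, this]

lemma one_div_tendsto_zero : Tendsto (fun B : ℝ => 1 / B) atTop (𝓝 0) := by
  simpa only [one_div] using tendsto_inv_atTop_zero

lemma pointwise_lim (m : ℕ) (hm : 1 ≤ m) (d : ℕ) :
    Tendsto (fun B : ℝ => Ffun m B d) atTop (𝓝 ((moebius d : ℝ) * (2 / (d : ℝ)) ^ m)) := by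
  rcases Nat.eq_zero_or_pos d with rfl | hd
  · simp only [Ffun, ArithmeticFunction.map_zero, Int.cast_zero, zero_mul, zero_div]
    simpa using tendsto_const_nhds
  have hd' : (0 : ℝ) < (d : ℝ) := by exact_mod_cast hd
  have h1 : Tendsto (fun B : ℝ => ((⌊B / (d : ℝ)⌋₊ : ℝ)) / B) atTop (𝓝 (1 / (d : ℝ))) := by
    have hcomp : Tendsto (fun B : ℝ => B / (d : ℝ)) atTop atTop :=
      tendsto_id.atTop_div_const hd'
    have h0 : Tendsto (fun B : ℝ => ((⌊B / (d : ℝ)⌋₊ : ℝ)) / (B / (d : ℝ)) * (1 / (d : ℝ)))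
        atTop (𝓝 (1 * (1 / (d : ℝ)))) :=
      (tendsto_nat_floor_div_atTop.comp hcomp).mul_const _
    rw [one_mul] at h0
    apply h0.congr'
    filter_upwards [eventually_gt_atTop (0 : ℝ)] with B hB
    field_simp
  have h2 : Tendsto (fun B : ℝ => (2 * ((⌊B⌋₊ / d : ℕ) : ℝ) + 1) / B) atTop
      (𝓝 (2 / (d : ℝ))) := by
    have h0 : Tendsto (fun B : ℝ => 2 * (((⌊B / (d : ℝ)⌋₊ : ℝ)) / B) + 1 / B) atTop
        (𝓝 (2 * (1 / (d : ℝ)) + 0)) := (h1.const_mul 2).add one_div_tendsto_zero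
    have h0' : (2 : ℝ) * (1 / (d : ℝ)) + 0 = 2 / (d : ℝ) := by ring
    rw [h0'] at h0
    apply h0.congr'
    filter_upwards [eventually_gt_atTop (0 : ℝ)] with B hB
    rw [Nat.floor_div_natCast]
    field_simp
  have h3 : Tendsto (fun B : ℝ => (moebius d : ℝ) *
      (((2 * ((⌊B⌋₊ / d : ℕ) : ℝ) + 1) / B) ^ m - (1 / B) ^ m)) atTop
      (𝓝 ((moebius d : ℝ) * ((2 / (d : ℝ)) ^ m - 0 ^ m))) :=
    (Tendsto.sub (h2.pow m) (one_div_tendsto_zero.pow m)).const_mul _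
  have hz : (0 : ℝ) ^ m = 0 := zero_pow (by omega)
  rw [hz, sub_zero] at h3
  apply h3.congr'
  filter_upwards [eventually_gt_atTop (0 : ℝ)] with B hB
  unfold Ffun
  rw [div_pow, div_pow]
  have hBm : (0 : ℝ) < B ^ m := pow_pos hB m
  field_simp
  rw [one_pow]

lemma bound_Ffun (m : ℕ) (hm : 1 ≤ m) :
    ∀ᶠ B : ℝ in atTop, ∀ d : ℕ, ‖Ffun m B d‖ ≤ 3 ^ m / (d : ℝ) ^ m := by
  filter_upwards [eventually_ge_atTop (1 : ℝ)] with B hB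
  intro d
  have hB0 : (0 : ℝ) < B := lt_of_lt_of_le one_pos hB
  rcases Nat.eq_zero_or_pos d with rfl | hd
  · simp [Ffun, ArithmeticFunction.map_zero, Real.norm_eq_abs, zero_pow (show m ≠ 0 by omega)]
  have hd' : (0 : ℝ) < (d : ℝ) := by exact_mod_cast hd
  by_cases hdb : d ≤ ⌊B⌋₊
  swap
  · rw [Ffun_vanish (by rw [Finset.mem_Icc]; omega), norm_zero]
    positivity
  -- main case
  have hdB : (d : ℝ) ≤ B := by
    calc (d : ℝ) ≤ (⌊B⌋₊ : ℝ) := by exact_mod_cast hdb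
      _ ≤ B := Nat.floor_le hB0.le
  set k : ℕ := ⌊B⌋₊ / d with hk
  have hkB : (k : ℝ) ≤ B / (d : ℝ) := by
    have : k = ⌊B / (d : ℝ)⌋₊ := by rw [hk, Nat.floor_div_natCast]
    rw [this]
    exact Nat.floor_le (by positivity)
  have h2k1 : (0 : ℝ) ≤ 2 * (k : ℝ) + 1 := by positivity
  have hone : (1 : ℝ) ≤ B / (d : ℝ) := (one_le_div hd').mpr hdB
  have hle : 2 * (k : ℝ) + 1 ≤ 3 * B / (d : ℝ) := by
    have : (3 : ℝ) * B / (d : ℝ) = 3 * (B / (d : ℝ)) := by ring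
    rw [this]
    nlinarith
  have hnum1 : (1 : ℝ) ≤ (2 * (k : ℝ) + 1) ^ m := one_le_pow₀ (by linarith)
  have hnum_nonneg : (0 : ℝ) ≤ (2 * (k : ℝ) + 1) ^ m - 1 := by linarith
  have hBm : (0 : ℝ) < B ^ m := pow_pos hB0 m
  have h5 : |(moebius d : ℝ)| ≤ 1 := by
    have := abs_moebius_le_one (n := d)
    exact_mod_cast this
  have key : ((3 * B / (d : ℝ)) ^ m) / B ^ m = 3 ^ m / (d : ℝ) ^ m := by
    rw [show (3 * B / (d : ℝ)) = (3 / (d : ℝ)) * B by ring, mul_pow, mul_div_assoc,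
      div_self hBm.ne', mul_one, div_pow]
  rw [Ffun, Real.norm_eq_abs, abs_div, abs_of_pos hBm, abs_mul,
    abs_of_nonneg hnum_nonneg]
  calc |(moebius d : ℝ)| * ((2 * (k : ℝ) + 1) ^ m - 1) / B ^ m
      ≤ 1 * ((3 * B / (d : ℝ)) ^ m) / B ^ m := by
        apply div_le_div_of_nonneg_right ?_ hBm.le
        calc |(moebius d : ℝ)| * ((2 * (k : ℝ) + 1) ^ m - 1)
            ≤ 1 * ((2 * (k : ℝ) + 1) ^ m - 1) :=
              mul_le_mul_of_nonneg_right h5 hnum_nonneg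
          _ ≤ 1 * ((3 * B / (d : ℝ)) ^ m) := by
              rw [one_mul, one_mul]
              calc (2 * (k : ℝ) + 1) ^ m - 1 ≤ (2 * (k : ℝ) + 1) ^ m := by linarith
                _ ≤ (3 * B / (d : ℝ)) ^ m := pow_le_pow_left₀ h2k1 hle m
    _ = 3 ^ m / (d : ℝ) ^ m := by rw [one_mul, key]


lemma bound_summable (m : ℕ) (hm : 2 ≤ m) :
    Summable (fun d : ℕ => (3 : ℝ) ^ m / (d : ℝ) ^ m) := by
  have : (fun d : ℕ => (3 : ℝ) ^ m / (d : ℝ) ^ m)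
      = fun d : ℕ => (3 : ℝ) ^ m * (1 / (d : ℝ) ^ m) := by
    funext d; rw [mul_one_div]
  rw [this]
  exact (Real.summable_one_div_nat_pow.mpr (by omega)).mul_left _

lemma tsum_Ffun (m : ℕ) (B : ℝ) :
    ∑' d : ℕ, Ffun m B d = ((copF m ⌊B⌋₊).card : ℝ) / B ^ m := by
  rw [tsum_eq_sum (s := Finset.Icc 1 ⌊B⌋₊) (fun d hd => Ffun_vanish hd)]
  have := count_main m ⌊B⌋₊
  have hcast : ((copF m ⌊B⌋₊).card : ℝ) =
      ∑ d ∈ Finset.Icc 1 ⌊B⌋₊,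
        (moebius d : ℝ) * ((2 * ((⌊B⌋₊ / d : ℕ) : ℝ) + 1) ^ m - 1) := by
    exact_mod_cast congrArg (fun z : ℤ => (z : ℝ)) this
  rw [hcast, Finset.sum_div]
  rfl

lemma key_zeta (m : ℕ) (hm : 2 ≤ m) :
    (∑' d : ℕ, ((moebius d : ℝ) / (d : ℝ) ^ m)) *
      (∑' k : ℕ, (1 : ℝ) / ((k : ℝ) + 1) ^ m) = 1 := by
  have hs : 1 < ((m : ℂ)).re := by
    simp only [Complex.natCast_re]
    exact_mod_cast by omega
  have key := LSeries_zeta_mul_Lseries_moebius (s := (m : ℂ)) hs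
  have hμ : LSeries (fun n => ((moebius n : ℤ) : ℂ)) (m : ℂ)
      = ((∑' d : ℕ, ((moebius d : ℝ) / (d : ℝ) ^ m) : ℝ) : ℂ) := by
    rw [Complex.ofReal_tsum]
    refine tsum_congr fun d => ?_
    rcases eq_or_ne d 0 with rfl | hd
    · simp [LSeries.term_zero]
    · rw [LSeries.term_of_ne_zero hd, Complex.cpow_natCast]
      push_cast
      ring
  have hζ : LSeries (fun n => ((zeta n : ℕ) : ℂ)) (m : ℂ)
      = ((∑' k : ℕ, (1 : ℝ) / ((k : ℝ) + 1) ^ m : ℝ) : ℂ) := by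
    have hsum : Summable (LSeries.term (fun n => ((zeta n : ℕ) : ℂ)) (m : ℂ)) :=
      LSeriesSummable_zeta_iff.mpr hs
    rw [LSeries, Summable.tsum_eq_zero_add hsum, LSeries.term_zero, zero_add, Complex.ofReal_tsum]
    refine tsum_congr fun k => ?_
    rw [LSeries.term_of_ne_zero (Nat.succ_ne_zero k), Complex.cpow_natCast]
    simp only [zeta_apply, Nat.succ_ne_zero, if_false]
    push_cast
    ring
  rw [hζ, hμ, ← Complex.ofReal_mul] at key
  rw [mul_comm]
  exact_mod_cast key

lemma set_eq_copF (m : ℕ) (B : ℝ) (hB : 0 ≤ B) :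
    {y : Fin m → ℤ | Finset.univ.gcd y = 1 ∧ ∀ i, |((y i : ℝ))| ≤ B}
      = ↑(copF m ⌊B⌋₊) := by
  ext y
  simp only [Set.mem_setOf_eq, copF, Finset.coe_filter, Finset.mem_coe, mem_boxF,
    Set.mem_setOf_eq]
  rw [and_comm]
  refine and_congr_left fun _ => forall_congr' fun i => ?_
  rw [← Int.cast_abs]
  constructor
  · intro h
    have h1 : |y i| ≤ ⌊B⌋ := Int.le_floor.mpr h
    rwa [← Int.natCast_floor_eq_floor hB] at h1
  · intro h
    calc ((|y i| : ℤ) : ℝ) ≤ ((⌊B⌋₊ : ℤ) : ℝ) := by exact_mod_cast h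
      _ ≤ B := by rw [Int.cast_natCast]; exact Nat.floor_le hB

/-- Counting rational points of bounded naive height on `ℙⁿ(ℚ)`: points are
represented by coprime integer tuples `(y₀, …, y_n)`, unique up to sign (whence the
division by `2`), with height `max_i |y_i|`.  The number of points of height at most
`B` is asymptotically `(2^n / ζ(n+1)) · B^(n+1)` as `B → ∞`. -/
theorem stmt_2 (n : ℕ) (hn : 1 ≤ n) :
    Tendsto
      (fun B : ℝ =>
        (({y : Fin (n + 1) → ℤ |
            Finset.univ.gcd y = 1 ∧ ∀ i, |((y i : ℝ))| ≤ B}.ncard : ℝ) / 2) / B ^ (n + 1))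
      atTop
      (nhds ((2 : ℝ) ^ n / ∑' k : ℕ, (1 : ℝ) / (k + 1) ^ (n + 1))) := by
  set m : ℕ := n + 1 with hm
  have hm2 : 2 ≤ m := by omega
  set S : ℝ := ∑' d : ℕ, ((moebius d : ℝ) / (d : ℝ) ^ m) with hS
  set Z : ℝ := ∑' k : ℕ, (1 : ℝ) / ((k : ℝ) + 1) ^ m with hZ
  have hSZ : S * Z = 1 := key_zeta m hm2
  have hZne : Z ≠ 0 := by
    intro h
    rw [h, mul_zero] at hSZ
    exact zero_ne_one hSZ
  -- main convergence of tsums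
  have main : Tendsto (fun B : ℝ => ∑' d : ℕ, Ffun m B d) atTop
      (𝓝 (∑' d : ℕ, (moebius d : ℝ) * (2 / (d : ℝ)) ^ m)) :=
    tendsto_tsum_of_dominated_convergence (bound_summable m hm2)
      (pointwise_lim m (by omega)) (bound_Ffun m (by omega))
  -- compute the limit
  have hlim : (∑' d : ℕ, (moebius d : ℝ) * (2 / (d : ℝ)) ^ m) = 2 ^ m * S := by
    rw [hS, ← tsum_mul_left]
    refine tsum_congr fun d => ?_
    rw [div_pow]
    ring
  rw [hlim] at main
  have main2 : Tendsto (fun B : ℝ => (∑' d : ℕ, Ffun m B d) / 2) atTop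
      (𝓝 ((2 ^ m * S) / 2)) := main.div_const 2
  have hfinal : (2 ^ m * S) / 2 = (2 : ℝ) ^ n / Z := by
    have hSval : S = 1 / Z := by
      field_simp
      linarith [hSZ]
    rw [hSval, hm]
    rw [pow_succ]
    field_simp
  rw [hfinal] at main2
  apply main2.congr'
  filter_upwards [eventually_ge_atTop (0 : ℝ)] with B hB
  rw [tsum_Ffun, set_eq_copF m B hB, Set.ncard_coe_finset]
  ring
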